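/- Let (W,S) be a Coxeter system and u, w ∈ W such that u is a prefix of w (i.e., ℓ(u) + ℓ(u⁻¹w) = ℓ(w)). If u ∈ W_J for some J ⊆ S, then u is a prefix of the left parabolic component _J w, and the component ^J w is a suffix of u⁻¹w (i.e., ℓ(u⁻¹w) = ℓ(u⁻¹w · (^J w)⁻¹) + ℓ(^J w)). -/

import Mathlib

open CoxeterSystem

variable {B W : Type*} [Group W] {Cm : CoxeterMatrix B} (cs : CoxeterSystem Cm W)

/-- Bruhat order on the Coxeter group `W`: the reflexive-transitive closure of the
relation "multiply on the right by a reflection, increasing the length". -/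
def bruhatLE : W → W → Prop :=
  Relation.ReflTransGen (fun u v => (∃ t, cs.IsReflection t ∧ v = u * t) ∧
    cs.length u < cs.length v)

/-- The covering relation of Bruhat order: `u ⋖ v` iff `u⁻¹v` is a reflection and
`ℓ(v) = ℓ(u) + 1`. -/
def bruhatCovBy (u v : W) : Prop :=
  cs.IsReflection (u⁻¹ * v) ∧ cs.length v = cs.length u + 1

/-- The standard parabolic subgroup `W_J` generated by the simple reflections
indexed by `J`. -/
def parabolic (J : Set B) : Subgroup W := Subgroup.closure (cs.simple '' J)

/-- `w` belongs to the set `W^J` of minimal length coset representatives of `W/W_J`. -/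
def isMinimalRight (J : Set B) (w : W) : Prop := ∀ j ∈ J, ¬ cs.IsRightDescent w j

/-- `w` belongs to the set `^J W` of minimal length coset representatives of `W_J\W`. -/
def isMinimalLeft (J : Set B) (w : W) : Prop := ∀ j ∈ J, ¬ cs.IsLeftDescent w j

namespace CoxAux

open List

attribute [local instance] Classical.propDecidable

variable {B W : Type*} [Group W] {Cm : CoxeterMatrix B} (cs : CoxeterSystem Cm W)

/-- The standard involution associated to a simple reflection, acting on `W × ZMod 2`. -/
noncomputable def eta (i : B) : Equiv.Perm (W × ZMod 2) :=
  Function.Involutive.toPerm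
    (fun x => (cs.simple i * x.1 * cs.simple i,
      x.2 + if x.1 = cs.simple i then 1 else 0))
    (by
      rintro ⟨t, e⟩
      simp only [Prod.mk.injEq]
      constructor
      · simp [mul_assoc, cs.simple_mul_simple_cancel_left, cs.simple_mul_simple_self]
      · by_cases h : t = cs.simple i
        · subst h
          rw [if_pos rfl, if_pos (by simp [mul_assoc, cs.simple_mul_simple_cancel_left,
              cs.simple_mul_simple_self])]
          have h11 : (1 + 1 : ZMod 2) = 0 := rfl
          rw [add_assoc, h11, add_zero]
        · rw [if_neg h, add_zero, if_neg, add_zero]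
          intro hc
          apply h
          have := congrArg (fun x => cs.simple i * x * cs.simple i) hc
          simpa [mul_assoc, cs.simple_mul_simple_cancel_left,
            cs.simple_mul_simple_self] using this)

theorem eta_apply (i : B) (t : W) (e : ZMod 2) :
    eta cs i (t, e) = (cs.simple i * t * cs.simple i,
      e + if t = cs.simple i then 1 else 0) := rfl

theorem eta_liftable : Cm.IsLiftable (eta cs) := by
  intro i j
  obtain ⟨p, hp⟩ : ∃ p : W, p = cs.simple i * cs.simple j := ⟨_, rfl⟩
  obtain ⟨u, hu⟩ : ∃ u : ℕ → W, u = fun k => cs.simple j * p ^ k := ⟨_, rfl⟩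
  have hps : p⁻¹ * cs.simple j = cs.simple j * p := by
    rw [hp, mul_inv_rev, cs.inv_simple, cs.inv_simple, mul_assoc]
  have hu2 : ∀ k, p⁻¹ * u k * p = u (k + 2) := by
    intro k
    simp only [hu]
    rw [show p⁻¹ * (cs.simple j * p ^ k) = (p⁻¹ * cs.simple j) * p ^ k from
      (mul_assoc _ _ _).symm, hps, mul_assoc (cs.simple j) p (p ^ k), mul_assoc,
      ← pow_succ', ← pow_succ]
  have hu2n : ∀ n k, (p ^ n)⁻¹ * u k * p ^ n = u (k + 2 * n) := by
    intro n
    induction n with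
    | zero => intro k; simp
    | succ n ih =>
      intro k
      have h1 : (p ^ (n + 1))⁻¹ * u k * p ^ (n + 1)
          = p⁻¹ * ((p ^ n)⁻¹ * u k * p ^ n) * p := by
        rw [pow_succ, mul_inv_rev]
        simp only [mul_assoc]
      rw [h1, ih, hu2]
      exact congrArg u (by ring)
  have hF : ∀ (t : W) (e : ZMod 2), (eta cs i * eta cs j) (t, e) =
      (p * t * p⁻¹, e + ((if t = u 0 then (1 : ZMod 2) else 0)
        + (if t = u 1 then (1 : ZMod 2) else 0))) := by
    intro t e
    rw [Equiv.Perm.mul_apply, eta_apply, eta_apply]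
    have h1 : cs.simple i * (cs.simple j * t * cs.simple j) * cs.simple i
        = p * t * p⁻¹ := by
      rw [hp, mul_inv_rev, cs.inv_simple, cs.inv_simple]
      simp only [mul_assoc]
    have hu1 : u 1 = cs.simple j * p := by simp [hu]
    have h2 : (cs.simple j * t * cs.simple j = cs.simple i) ↔ (t = u 1) := by
      rw [hu1, hp]
      constructor
      · intro h
        have h' := congrArg (fun x => cs.simple j * x * cs.simple j) h
        rw [show cs.simple j * (cs.simple j * t * cs.simple j) * cs.simple j = t by
          simp [mul_assoc, cs.simple_mul_simple_cancel_left,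
            cs.simple_mul_simple_self]] at h'
        rw [h', mul_assoc]
      · intro h
        rw [h]
        simp [mul_assoc, cs.simple_mul_simple_cancel_left,
          cs.simple_mul_simple_self, cs.simple_mul_simple_cancel_right]
    have h3 : (t = cs.simple j) ↔ (t = u 0) := by simp [hu]
    rw [Prod.mk.injEq]
    exact ⟨h1, by rw [if_congr h3 rfl rfl, if_congr h2 rfl rfl, add_assoc]⟩
  have key : ∀ n : ℕ, ∀ t : W, ∀ e : ZMod 2,
      ((eta cs i * eta cs j) ^ n) (t, e) =
        (p ^ n * t * (p ^ n)⁻¹,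
          e + ∑ k ∈ Finset.range (2 * n), if t = u k then (1 : ZMod 2) else 0) := by
    intro n
    induction n with
    | zero => intro t e; simp
    | succ n ih =>
      intro t e
      rw [pow_succ', Equiv.Perm.mul_apply, ih, hF]
      have e0 : (p ^ n * t * (p ^ n)⁻¹ = u 0) ↔ (t = u (2 * n)) := by
        have h0 : (p ^ n)⁻¹ * u 0 * p ^ n = u (2 * n) := by
          rw [hu2n]
          exact congrArg u (by ring)
        rw [← h0]
        constructor
        · intro h
          have := congrArg (fun x => (p ^ n)⁻¹ * x * p ^ n) h
          simpa [mul_assoc] using this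
        · intro h
          rw [show t = (p ^ n)⁻¹ * (p ^ n * t * (p ^ n)⁻¹) * p ^ n by group] at h
          have := congrArg (fun x => p ^ n * x * (p ^ n)⁻¹) h
          simpa [mul_assoc] using this
      have e1 : (p ^ n * t * (p ^ n)⁻¹ = u 1) ↔ (t = u (2 * n + 1)) := by
        have h0 : (p ^ n)⁻¹ * u 1 * p ^ n = u (2 * n + 1) := by
          rw [hu2n]
          exact congrArg u (by ring)
        rw [← h0]
        constructor
        · intro h
          have := congrArg (fun x => (p ^ n)⁻¹ * x * p ^ n) h
          simpa [mul_assoc] using this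
        · intro h
          rw [show t = (p ^ n)⁻¹ * (p ^ n * t * (p ^ n)⁻¹) * p ^ n by group] at h
          have := congrArg (fun x => p ^ n * x * (p ^ n)⁻¹) h
          simpa [mul_assoc] using this
      rw [Prod.mk.injEq]
      constructor
      · rw [pow_succ', mul_inv_rev]
        simp only [mul_assoc]
      · rw [if_congr e0 rfl rfl, if_congr e1 rfl rfl]
        have h2n : 2 * (n + 1) = (2 * n + 1) + 1 := by ring
        rw [h2n, Finset.sum_range_succ, Finset.sum_range_succ]
        ring
  have hml : p ^ (Cm i j) = 1 := by rw [hp]; exact cs.simple_mul_simple_pow i j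
  refine Equiv.ext ?_
  rintro ⟨t, e⟩
  rw [key (Cm i j) t e, hml]
  have hper : ∀ k, u (Cm i j + k) = u k := by
    intro k
    simp only [hu, pow_add, hml, one_mul]
  have hsplit : (∑ k ∈ Finset.range (2 * Cm i j), if t = u k then (1 : ZMod 2) else 0)
      = 0 := by
    have h2 : 2 * Cm i j = Cm i j + Cm i j := by ring
    rw [h2, Finset.range_eq_Ico, ← Finset.sum_Ico_consecutive
      (fun k => if t = u k then (1 : ZMod 2) else 0)
      (Nat.zero_le (Cm i j)) (Nat.le_add_right (Cm i j) (Cm i j)),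
      Finset.sum_Ico_eq_sum_range, Finset.sum_Ico_eq_sum_range]
    simp only [Nat.add_sub_cancel, Nat.sub_zero, Nat.zero_add, zero_add, hper]
    exact CharTwo.add_self_eq_zero _
  rw [hsplit, add_zero]
  simp

/-- The reflection cocycle homomorphism. -/
noncomputable def phi : W →* Equiv.Perm (W × ZMod 2) :=
  cs.lift ⟨eta cs, eta_liftable cs⟩

theorem phi_simple (i : B) : phi cs (cs.simple i) = eta cs i :=
  cs.lift_apply_simple (eta_liftable cs) i

theorem phi_apply' (w : W) : ∀ (t : W) (e : ZMod 2),
    phi cs w (t, e) = (w * t * w⁻¹, e + (phi cs w (t, 0)).2) := by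
  induction w using cs.simple_induction_left with
  | one =>
    intro t e
    rw [map_one]
    simp
  | mul_simple_left w i ih =>
    intro t e
    obtain ⟨nn, hnn⟩ : ∃ nn, nn = (phi cs w (t, 0)).2 := ⟨_, rfl⟩
    have ih0 : phi cs w (t, 0) = (w * t * w⁻¹, nn) := by
      rw [ih t 0, ← hnn, zero_add]
    have ihe : phi cs w (t, e) = (w * t * w⁻¹, e + nn) := by
      rw [ih t e, ← hnn]
    rw [map_mul, Equiv.Perm.mul_apply, Equiv.Perm.mul_apply, phi_simple, ihe, ih0,
      eta_apply, eta_apply]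
    rw [Prod.mk.injEq]
    constructor
    · simp only [mul_inv_rev, cs.inv_simple, mul_assoc]
    · ring

theorem phi_apply (w t : W) (e : ZMod 2) :
    phi cs w (t, e) = (w * t * w⁻¹, e + (phi cs w (t, 0)).2) := phi_apply' cs w t e

theorem phi_snd_eq_zero_of_not_mem (ω : List B) (t : W) (h : t ∉ cs.leftInvSeq ω) :
    (phi cs (cs.wordProd ω)⁻¹ (t, 0)).2 = 0 := by
  induction ω generalizing t with
  | nil => simp
  | cons i ω ih =>
    rw [leftInvSeq] at h
    simp only [mem_cons, not_or] at h
    obtain ⟨h1, h2⟩ := h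
    have h3 : cs.simple i * t * cs.simple i ∉ cs.leftInvSeq ω := by
      intro hc
      apply h2
      refine List.mem_map.mpr ⟨cs.simple i * t * cs.simple i, hc, ?_⟩
      rw [MulAut.conj_apply, cs.inv_simple]
      simp [mul_assoc, cs.simple_mul_simple_cancel_left, cs.simple_mul_simple_self]
    rw [cs.wordProd_cons, mul_inv_rev, map_mul, Equiv.Perm.mul_apply, cs.inv_simple,
      phi_simple, eta_apply, if_neg h1, add_zero]
    exact ih _ h3

theorem phi_self {t : W} (ht : cs.IsReflection t) : (phi cs t (t, 0)).2 = 1 := by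
  obtain ⟨v, i, rfl⟩ := ht
  obtain ⟨c, hc⟩ : ∃ c, c = (phi cs v⁻¹ (v * cs.simple i * v⁻¹, 0)).2 := ⟨_, rfl⟩
  obtain ⟨d, hd⟩ : ∃ d, d = (phi cs v (cs.simple i, 0)).2 := ⟨_, rfl⟩
  have h1 : phi cs v⁻¹ (v * cs.simple i * v⁻¹, 0) = (cs.simple i, c) := by
    rw [phi_apply, ← hc]
    rw [Prod.mk.injEq]
    exact ⟨by group, by rw [zero_add]⟩
  have h2 : phi cs v (cs.simple i, c) = (v * cs.simple i * v⁻¹, 0) := by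
    rw [← h1, ← Equiv.Perm.mul_apply, ← map_mul, mul_inv_cancel, map_one]
    rfl
  have h3 : c + d = 0 := by
    have h2' := h2
    rw [phi_apply, ← hd] at h2'
    have := congrArg Prod.snd h2'
    simpa using this
  rw [map_mul, map_mul, Equiv.Perm.mul_apply, Equiv.Perm.mul_apply, phi_simple, h1,
    eta_apply, if_pos rfl]
  rw [show cs.simple i * cs.simple i * cs.simple i = cs.simple i by
    rw [cs.simple_mul_simple_self, one_mul]]
  rw [phi_apply, ← hd]
  show c + 1 + d = 1
  have hfin : c + 1 + d = (c + d) + 1 := by ring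
  rw [hfin, h3, zero_add]

theorem mem_leftInvSeq_of_lt {t : W} (ht : cs.IsReflection t) {ω : List B}
    (hlt : cs.length (t * cs.wordProd ω) < cs.length (cs.wordProd ω)) :
    t ∈ cs.leftInvSeq ω := by
  by_contra hmem
  have h0 : (phi cs (cs.wordProd ω)⁻¹ (t, 0)).2 = 0 :=
    phi_snd_eq_zero_of_not_mem cs ω t hmem
  obtain ⟨ω', hred', hw'⟩ := cs.exists_reduced_word' (t * cs.wordProd ω)
  have htt : phi cs t (t, 0) = (t, 1) := by
    rw [phi_apply, phi_self cs ht]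
    rw [Prod.mk.injEq]
    refine ⟨?_, rfl⟩
    rw [ht.mul_self, one_mul, ht.inv]
  have h1 : (phi cs (cs.wordProd ω')⁻¹ (t, 0)).2 = 1 := by
    rw [← hw', mul_inv_rev, ht.inv, map_mul, Equiv.Perm.mul_apply, htt, phi_apply, h0,
      add_zero]
  have hmem' : t ∈ cs.leftInvSeq ω' := by
    by_contra hcm
    rw [phi_snd_eq_zero_of_not_mem cs ω' t hcm] at h1
    exact absurd h1 (by decide)
  have h2 := cs.isLeftInversion_of_mem_leftInvSeq hred' hmem'
  rw [← hw'] at h2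
  obtain ⟨-, h3⟩ := h2
  rw [← mul_assoc, ht.mul_self, one_mul] at h3
  omega

theorem exists_eraseIdx_of_left_descent (ω : List B) (i : B)
    (h : cs.length (cs.simple i * cs.wordProd ω) < cs.length (cs.wordProd ω)) :
    ∃ j, j < ω.length ∧ cs.simple i * cs.wordProd ω = cs.wordProd (ω.eraseIdx j) := by
  have hm := mem_leftInvSeq_of_lt cs (cs.isReflection_simple i) h
  obtain ⟨j, hj, hget⟩ := List.mem_iff_getElem.mp hm
  rw [← List.getD_eq_getElem _ 1 hj] at hget
  have hkey := cs.getD_leftInvSeq_mul_wordProd ω j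
  rw [hget] at hkey
  rw [cs.length_leftInvSeq] at hj
  exact ⟨j, hj, hkey⟩

theorem exists_shorter_of_right_descent (ω : List B) (i : B)
    (h : cs.length (cs.wordProd ω * cs.simple i) < cs.length (cs.wordProd ω)) :
    ∃ σ : List B, cs.wordProd ω * cs.simple i = cs.wordProd σ ∧
      σ.length + 1 = ω.length ∧ ∀ x ∈ σ, x ∈ ω := by
  have hinv : cs.simple i * cs.wordProd ω.reverse = (cs.wordProd ω * cs.simple i)⁻¹ := by
    rw [cs.wordProd_reverse, mul_inv_rev, cs.inv_simple]
  have h' : cs.length (cs.simple i * cs.wordProd ω.reverse)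
      < cs.length (cs.wordProd ω.reverse) := by
    rw [hinv, cs.wordProd_reverse, cs.length_inv, cs.length_inv]
    exact h
  obtain ⟨j, hj, heq⟩ := exists_eraseIdx_of_left_descent cs ω.reverse i h'
  refine ⟨(ω.reverse.eraseIdx j).reverse, ?_, ?_, ?_⟩
  · rw [cs.wordProd_reverse, ← heq, hinv, inv_inv]
  · rw [List.length_reverse]
    have := List.length_eraseIdx_add_one (l := ω.reverse) (i := j) (by simpa using hj)
    simpa using this
  · intro x hx
    rw [List.mem_reverse] at hx
    have := (List.eraseIdx_sublist ω.reverse j).subset hx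
    simpa using this

theorem isReduced_nil : cs.IsReduced ([] : List B) := by
  show cs.length (cs.wordProd []) = ([] : List B).length
  simp

theorem exists_reduced_jword (J : Set B) :
    ∀ n (ω : List B), ω.length = n → (∀ x ∈ ω, x ∈ J) →
    ∃ σ, (∀ x ∈ σ, x ∈ J) ∧ cs.IsReduced σ ∧ cs.wordProd σ = cs.wordProd ω := by
  intro n
  induction n using Nat.strong_induction_on with
  | _ n ihn =>
    intro ω hlen hJ
    by_cases hred : cs.IsReduced ω
    · exact ⟨ω, hJ, hred, rfl⟩
    · have hωne : ω ≠ [] := by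
        rintro rfl
        exact hred (isReduced_nil cs)
      have hω1 : 1 ≤ ω.length := by
        cases ω with
        | nil => exact absurd rfl hωne
        | cons a l => simp
      have hex : ∃ k, ¬ cs.IsReduced (ω.take (k + 1)) := by
        refine ⟨ω.length - 1, ?_⟩
        rw [Nat.sub_add_cancel hω1, List.take_of_length_le (le_refl _)]
        exact hred
      have hk : ¬ cs.IsReduced (ω.take (Nat.find hex + 1)) := Nat.find_spec hex
      obtain ⟨k, hkdef⟩ : ∃ k, k = Nat.find hex := ⟨_, rfl⟩
      rw [← hkdef] at hk
      have hmin : ∀ m, m < k → cs.IsReduced (ω.take (m + 1)) := by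
        intro m hm
        rw [hkdef] at hm
        exact not_not.mp (Nat.find_min hex hm)
      have hklt : k < ω.length := by
        have h1 : Nat.find hex ≤ ω.length - 1 := Nat.find_min' hex (by
          rw [Nat.sub_add_cancel hω1, List.take_of_length_le (le_refl _)]
          exact hred)
        omega
      have hredk : cs.IsReduced (ω.take k) := by
        rcases Nat.eq_zero_or_pos k with hk0 | hk0
        · rw [hk0]
          simpa using isReduced_nil cs
        · have := hmin (k - 1) (by omega)
          rwa [Nat.sub_add_cancel (by omega)] at this
      have hlentake : (ω.take k).length = k := by
        rw [List.length_take]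
        omega
      have hxlen : cs.length (cs.wordProd (ω.take k)) = k := by
        have h1 : cs.length (cs.wordProd (ω.take k)) = (ω.take k).length := hredk
        rw [h1, hlentake]
      have htake : ω.take (k + 1) = ω.take k ++ [ω[k]] := by
        rw [List.take_succ, List.getElem?_eq_getElem hklt]
        simp
      have hprod : cs.wordProd (ω.take (k + 1))
          = cs.wordProd (ω.take k) * cs.simple ω[k] := by
        rw [htake, cs.wordProd_append, cs.wordProd_singleton]
      have hlen1 : cs.length (cs.wordProd (ω.take k) * cs.simple ω[k]) ≠ k + 1 := by
        intro hcontra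
        apply hk
        show cs.length (cs.wordProd (ω.take (k + 1))) = (ω.take (k + 1)).length
        rw [hprod, hcontra, List.length_take]
        omega
      have hlt : cs.length (cs.wordProd (ω.take k) * cs.simple ω[k])
          < cs.length (cs.wordProd (ω.take k)) := by
        rcases cs.length_mul_simple (cs.wordProd (ω.take k)) ω[k] with hcase | hcase
        · rw [hxlen] at hcase; omega
        · omega
      obtain ⟨σ₁, hσ₁prod, hσ₁len, hσ₁mem⟩ :=
        exists_shorter_of_right_descent cs (ω.take k) ω[k] hlt
      obtain ⟨σ, hσdef⟩ : ∃ σ : List B, σ = σ₁ ++ ω.drop (k + 1) := ⟨_, rfl⟩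
      have hσprod : cs.wordProd σ = cs.wordProd ω := by
        rw [hσdef, cs.wordProd_append, ← hσ₁prod, ← hprod, ← cs.wordProd_append,
          List.take_append_drop]
      have hσJ : ∀ x ∈ σ, x ∈ J := by
        intro x hx
        rw [hσdef, List.mem_append] at hx
        rcases hx with hx | hx
        · exact hJ x ((List.take_sublist k ω).subset (hσ₁mem x hx))
        · exact hJ x ((List.drop_sublist (k + 1) ω).subset hx)
      have hσlen : σ.length < n := by
        rw [hσdef, List.length_append, List.length_drop]
        rw [hlentake] at hσ₁len
        omega
      obtain ⟨σ', hs1, hs2, hs3⟩ := ihn σ.length hσlen σ rfl hσJ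
      exact ⟨σ', hs1, hs2, by rw [hs3, hσprod]⟩

theorem parabolic_mem_exists_word {J : Set B} {a : W}
    (ha : a ∈ Subgroup.closure (cs.simple '' J)) :
    ∃ ω : List B, (∀ x ∈ ω, x ∈ J) ∧ cs.wordProd ω = a := by
  induction ha using Subgroup.closure_induction with
  | mem x hx =>
    obtain ⟨i, hi, rfl⟩ := hx
    exact ⟨[i], by simpa using hi, by simp⟩
  | one => exact ⟨[], by simp, by simp⟩
  | mul x y hx hy ihx ihy =>
    obtain ⟨ω₁, hm1, hp1⟩ := ihx
    obtain ⟨ω₂, hm2, hp2⟩ := ihy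
    refine ⟨ω₁ ++ ω₂, ?_, by rw [cs.wordProd_append, hp1, hp2]⟩
    intro z hz
    rcases List.mem_append.mp hz with hcase | hcase
    · exact hm1 z hcase
    · exact hm2 z hcase
  | inv x hx ihx =>
    obtain ⟨ω₁, hm1, hp1⟩ := ihx
    exact ⟨ω₁.reverse, fun z hz => hm1 z (List.mem_reverse.mp hz),
      by rw [cs.wordProd_reverse, hp1]⟩

theorem exists_decomp (J : Set B) :
    ∀ n (w : W), cs.length w = n →
    ∃ (ωa : List B) (c : W), (∀ x ∈ ωa, x ∈ J) ∧ (∀ j ∈ J, ¬ cs.IsLeftDescent c j) ∧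
      w = cs.wordProd ωa * c ∧
      cs.length w = cs.length (cs.wordProd ωa) + cs.length c := by
  intro n
  induction n using Nat.strong_induction_on with
  | _ n ihn =>
    intro w hlen
    by_cases hd : ∃ i ∈ J, cs.IsLeftDescent w i
    · obtain ⟨i, hiJ, hdes⟩ := hd
      have hlt : cs.length (cs.simple i * w) < cs.length w := hdes
      obtain ⟨ωa', c, hJ', hc', heq', hlen'⟩ :=
        ihn (cs.length (cs.simple i * w)) (by omega) (cs.simple i * w) rfl
      have hww' : w = cs.simple i * (cs.simple i * w) := by
        rw [cs.simple_mul_simple_cancel_left]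
      have h1 : cs.length w = cs.length (cs.simple i * w) + 1 := by
        rcases cs.length_simple_mul (cs.simple i * w) i with hcase | hcase
        · rw [← hww'] at hcase; exact hcase
        · rw [← hww'] at hcase; omega
      have heqw : w = cs.wordProd (i :: ωa') * c := by
        rw [cs.wordProd_cons, mul_assoc, ← heq', cs.simple_mul_simple_cancel_left]
      refine ⟨i :: ωa', c, ?_, hc', heqw, ?_⟩
      · intro x hx
        rcases List.mem_cons.mp hx with hcase | hcase
        · exact hcase ▸ hiJ
        · exact hJ' x hcase
      · have h2 : cs.length (cs.wordProd (i :: ωa')) ≤ cs.length (cs.wordProd ωa') + 1 := by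
          rw [cs.wordProd_cons]
          have := cs.length_mul_le (cs.simple i) (cs.wordProd ωa')
          rw [cs.length_simple] at this
          omega
        have h3 : cs.length w ≤ cs.length (cs.wordProd (i :: ωa')) + cs.length c := by
          rw [heqw]
          exact cs.length_mul_le _ _
        omega
    · push_neg at hd
      exact ⟨[], w, by simp, hd, by simp, by simp⟩

theorem length_parabolic_mul (J : Set B) :
    ∀ n (c : W), cs.length c = n → (∀ j ∈ J, ¬ cs.IsLeftDescent c j) →
    ∀ (ω : List B), (∀ x ∈ ω, x ∈ J) → cs.IsReduced ω →
    cs.length (cs.wordProd ω * c) = cs.length (cs.wordProd ω) + cs.length c := by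
  intro n
  induction n using Nat.strong_induction_on with
  | _ n ihc =>
    intro c hcn hc ω
    induction ω with
    | nil => intro _ _; simp
    | cons i ω'' ihw =>
      intro hJ hred
      have hJ'' : ∀ x ∈ ω'', x ∈ J := fun x hx => hJ x (List.mem_cons_of_mem i hx)
      have hred'' : cs.IsReduced ω'' := by
        have := hred.drop 1
        simpa using this
      have ih2 : cs.length (cs.wordProd ω'' * c)
          = cs.length (cs.wordProd ω'') + cs.length c := ihw hJ'' hred''
      have hlen'' : cs.length (cs.wordProd ω'') = ω''.length := hred''
      have hlenA : cs.length (cs.wordProd (i :: ω'')) = ω''.length + 1 := by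
        have h1 : cs.length (cs.wordProd (i :: ω'')) = (i :: ω'').length := hred
        simpa using h1
      have hprodcons : cs.wordProd (i :: ω'') = cs.simple i * cs.wordProd ω'' :=
        cs.wordProd_cons i ω''
      by_contra hne
      have hlt : cs.length (cs.simple i * (cs.wordProd ω'' * c))
          < cs.length (cs.wordProd ω'' * c) := by
        rcases cs.length_simple_mul (cs.wordProd ω'' * c) i with hcase | hcase
        · exfalso
          apply hne
          rw [hprodcons, mul_assoc, hcase, ih2, ← hprodcons, hlenA, hlen'']
          omega
        · omega
      obtain ⟨ωc, hωcred, hωc⟩ := cs.exists_reduced_word' c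
      have hclen : cs.length c = ωc.length := by
        rw [hωc]
        exact hωcred
      have hcat_prod : cs.wordProd (ω'' ++ ωc) = cs.wordProd ω'' * c := by
        rw [cs.wordProd_append, ← hωc]
      have hcat_red : cs.IsReduced (ω'' ++ ωc) := by
        show cs.length (cs.wordProd (ω'' ++ ωc)) = (ω'' ++ ωc).length
        rw [hcat_prod, ih2, hlen'', hclen, List.length_append]
      have hlt' : cs.length (cs.simple i * cs.wordProd (ω'' ++ ωc))
          < cs.length (cs.wordProd (ω'' ++ ωc)) := by
        rw [hcat_prod]
        exact hlt
      obtain ⟨j, hj, herase⟩ := exists_eraseIdx_of_left_descent cs (ω'' ++ ωc) i hlt'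
      rw [List.length_append] at hj
      rw [hcat_prod] at herase
      by_cases hcase : j < ω''.length
      · rw [List.eraseIdx_append_of_lt_length hcase, cs.wordProd_append, ← hωc] at herase
        have heq2 : cs.simple i * cs.wordProd ω'' = cs.wordProd (ω''.eraseIdx j) := by
          have h' : (cs.simple i * cs.wordProd ω'') * c
              = cs.wordProd (ω''.eraseIdx j) * c := by
            rw [mul_assoc]
            exact herase
          exact mul_right_cancel h'
        have hub : cs.length (cs.simple i * cs.wordProd ω'') ≤ (ω''.eraseIdx j).length := by
          rw [heq2]
          exact cs.length_wordProd_le _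
        have herlen : (ω''.eraseIdx j).length + 1 = ω''.length :=
          List.length_eraseIdx_add_one hcase
        rw [← hprodcons, hlenA] at hub
        omega
      · push_neg at hcase
        rw [List.eraseIdx_append_of_length_le hcase, cs.wordProd_append] at herase
        obtain ⟨v', hv'def⟩ : ∃ v', v' = cs.wordProd (ωc.eraseIdx (j - ω''.length)) :=
          ⟨_, rfl⟩
        rw [← hv'def] at herase
        have hkc : j - ω''.length < ωc.length := by omega
        have hv'len : cs.length v' + 1 ≤ ωc.length := by
          have hb1 : cs.length v' ≤ (ωc.eraseIdx (j - ω''.length)).length := by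
            rw [hv'def]
            exact cs.length_wordProd_le _
          have hb2 := List.length_eraseIdx_add_one hkc
          omega
        have hv'' : (cs.wordProd ω'')⁻¹ * cs.simple i * cs.wordProd ω'' * c = v' := by
          have hA : cs.wordProd ω'' *
              ((cs.wordProd ω'')⁻¹ * cs.simple i * cs.wordProd ω'' * c)
              = cs.wordProd ω'' * v' := by
            rw [← herase]
            group
          exact mul_left_cancel hA
        obtain ⟨ωa2, c2, hωa2J, hc2, hv'dec, hv'len2⟩ :=
          exists_decomp cs J (cs.length v') v' rfl
        have hc2lt : cs.length c2 < cs.length c := by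
          rw [hclen]
          omega
        have hv''2 : ((cs.wordProd ω'')⁻¹ * cs.simple i * cs.wordProd ω'') * c
            = cs.wordProd ωa2 * c2 := by
          rw [hv'', hv'dec]
        have hinvol : ((cs.wordProd ω'')⁻¹ * cs.simple i * cs.wordProd ω'') *
            (((cs.wordProd ω'')⁻¹ * cs.simple i * cs.wordProd ω'') * c) = c := by
          simp [mul_assoc, cs.simple_mul_simple_cancel_left]
        have hc_eq : c = ((cs.wordProd ω'')⁻¹ * cs.simple i *
            (cs.wordProd ω'' * cs.wordProd ωa2)) * c2 := by
          conv_lhs => rw [← hinvol]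
          rw [hv''2]
          group
        obtain ⟨ρ₀, hρ₀def⟩ : ∃ ρ₀ : List B, ρ₀ = ω''.reverse ++ i :: (ω'' ++ ωa2) :=
          ⟨_, rfl⟩
        have hρ₀J : ∀ x ∈ ρ₀, x ∈ J := by
          intro x hx
          rw [hρ₀def, List.mem_append, List.mem_cons, List.mem_append] at hx
          rcases hx with hx | hx | hx | hx
          · exact hJ'' x (List.mem_reverse.mp hx)
          · exact hx ▸ hJ i (List.mem_cons_self)
          · exact hJ'' x hx
          · exact hωa2J x hx
        have hρ₀prod : cs.wordProd ρ₀ = (cs.wordProd ω'')⁻¹ * cs.simple i *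
            (cs.wordProd ω'' * cs.wordProd ωa2) := by
          rw [hρ₀def, cs.wordProd_append, cs.wordProd_cons, cs.wordProd_append,
            cs.wordProd_reverse]
          group
        obtain ⟨ρ, hρJ, hρred, hρprod⟩ :=
          exists_reduced_jword cs J ρ₀.length ρ₀ rfl hρ₀J
        have hSc2 : ∀ (σ : List B), (∀ x ∈ σ, x ∈ J) → cs.IsReduced σ →
            cs.length (cs.wordProd σ * c2) = cs.length (cs.wordProd σ) + cs.length c2 :=
          fun σ hσJ hσred => ihc (cs.length c2) (by omega) c2 rfl hc2 σ hσJ hσred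
        have h5 : cs.length c = cs.length (cs.wordProd ρ) + cs.length c2 := by
          conv_lhs => rw [hc_eq, ← hρ₀prod, ← hρprod]
          exact hSc2 ρ hρJ hρred
        cases ρ with
        | nil =>
          rw [cs.wordProd_nil, cs.length_one, zero_add] at h5
          omega
        | cons r ρ' =>
          have hrJ : r ∈ J := hρJ r (List.mem_cons_self)
          have hρ'J : ∀ x ∈ ρ', x ∈ J := fun x hx => hρJ x (List.mem_cons_of_mem r hx)
          have hρ'red : cs.IsReduced ρ' := by
            have := hρred.drop 1
            simpa using this
          have hsc : cs.simple r * c = cs.wordProd ρ' * c2 := by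
            rw [hc_eq, ← hρ₀prod, ← hρprod, cs.wordProd_cons, ← mul_assoc,
              cs.simple_mul_simple_cancel_left]
          have h6 : cs.length (cs.simple r * c)
              = cs.length (cs.wordProd ρ') + cs.length c2 := by
            rw [hsc]
            exact hSc2 ρ' hρ'J hρ'red
          have h7 : cs.length (cs.wordProd (r :: ρ')) = ρ'.length + 1 := by
            have h7' : cs.length (cs.wordProd (r :: ρ')) = (r :: ρ').length := hρred
            simpa using h7'
          have h8 : cs.length (cs.wordProd ρ') = ρ'.length := hρ'red
          have hdes : cs.IsLeftDescent c r := by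
            show cs.length (cs.simple r * c) < cs.length c
            omega
          exact hc r hrJ hdes

end CoxAux


/-- If `u` is a prefix of `w` and `u ∈ W_J`, then `u` is a prefix of `_J w` and
`^J w` is a suffix of `u⁻¹ w`. Here `w = b · c` with `b = _J w ∈ W_J`,
`c = ^J w ∈ ^J W` and additive lengths. -/
theorem prefix_of_parabolic_component (J : Set B) (u w b c : W)
    (hprefix : cs.length u + cs.length (u⁻¹ * w) = cs.length w)
    (hu : u ∈ parabolic cs J)
    (hw : w = b * c) (hb : b ∈ parabolic cs J) (hc : isMinimalLeft cs J c)
    (hl : cs.length w = cs.length b + cs.length c) :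
    cs.length u + cs.length (u⁻¹ * b) = cs.length b ∧
    cs.length ((u⁻¹ * w) * c⁻¹) + cs.length c = cs.length (u⁻¹ * w) := by
  have hub : u⁻¹ * b ∈ Subgroup.closure (cs.simple '' J) := mul_mem (inv_mem hu) hb
  obtain ⟨ω0, hω0J, hω0⟩ := CoxAux.parabolic_mem_exists_word cs hub
  obtain ⟨ω, hωJ, hωred, hωprod⟩ :=
    CoxAux.exists_reduced_jword cs J ω0.length ω0 rfl hω0J
  have hωeq : cs.wordProd ω = u⁻¹ * b := by rw [hωprod, hω0]
  have key : cs.length ((u⁻¹ * b) * c) = cs.length (u⁻¹ * b) + cs.length c := by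
    rw [← hωeq]
    exact CoxAux.length_parabolic_mul cs J (cs.length c) c rfl hc ω hωJ hωred
  have h1 : u⁻¹ * w = (u⁻¹ * b) * c := by rw [hw, mul_assoc]
  have h2 : (u⁻¹ * w) * c⁻¹ = u⁻¹ * b := by rw [h1]; group
  have h3 : cs.length (u⁻¹ * w) = cs.length (u⁻¹ * b) + cs.length c := by
    rw [h1, key]
  constructor
  · omega
  · rw [h2, h3]
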